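/- Let A be a closed densely defined operator from H1 to H2 and B = A† its Moore–Penrose inverse. Then (I + A*A)^{-1} + (I + BB*)^{-1} = I + P_{N(B*)}, where P_{N(B*)} is the orthogonal projection onto the null space of B*. -/

import Mathlib

open scoped InnerProductSpace

variable {H1 H2 : Type*}
  [NormedAddCommGroup H1] [InnerProductSpace ℂ H1] [CompleteSpace H1]
  [NormedAddCommGroup H2] [InnerProductSpace ℂ H2] [CompleteSpace H2]

/-- `B` is the Moore–Penrose inverse of the closed densely defined operator `A : H1 →ₗ. H2`. -/
def IsMPInverseP (A : H1 →ₗ.[ℂ] H2) (B : H2 →ₗ.[ℂ] H1) : Prop :=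
  B.IsClosed ∧
    B.domain = LinearMap.range A.toFun ⊔
      (LinearMap.ker A.adjoint.toFun).map A.adjoint.domain.subtype ∧
    (LinearMap.ker B.toFun).map B.domain.subtype =
      (LinearMap.ker A.adjoint.toFun).map A.adjoint.domain.subtype ∧
    (∀ x : A.domain, ∃ h : A x ∈ B.domain, ∃ h2 : B ⟨A x, h⟩ ∈ A.domain,
      A ⟨B ⟨A x, h⟩, h2⟩ = A x) ∧
    (∀ y : B.domain, ∃ h2 : B y ∈ A.domain, ∃ h : A ⟨B y, h2⟩ ∈ B.domain,
      B ⟨A ⟨B y, h2⟩, h⟩ = B y) ∧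
    (∀ (y : B.domain) (h2 : B y ∈ A.domain),
      A ⟨B y, h2⟩ ∈ (LinearMap.range A.toFun).topologicalClosure ∧
      ∀ z ∈ (LinearMap.range A.toFun).topologicalClosure, ⟪(y : H2) - A ⟨B y, h2⟩, z⟫_ℂ = 0) ∧
    (∀ (x : A.domain) (h : A x ∈ B.domain),
      B ⟨A x, h⟩ ∈ (LinearMap.range B.toFun).topologicalClosure ∧
      ∀ z ∈ (LinearMap.range B.toFun).topologicalClosure, ⟪(x : H1) - B ⟨A x, h⟩, z⟫_ℂ = 0)

/-- For a closed densely defined `A` with Moore–Penrose inverse `B`,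
`(I + A*A)⁻¹ + (I + BB*)⁻¹ = I + P_{N(B*)}`, where `P` is the orthogonal projection onto
the null space of `B*`. -/
theorem mp_resolvent_sum (A : H1 →ₗ.[ℂ] H2) (hA : A.IsClosed) (hAd : Dense (A.domain : Set H1))
    (B : H2 →ₗ.[ℂ] H1) (hB : IsMPInverseP A B)
    (R1 : H1 →L[ℂ] H1)
    (hR1 : ∀ x : H1, ∃ hx : R1 x ∈ A.domain, ∃ hy : A ⟨R1 x, hx⟩ ∈ A.adjoint.domain,
      R1 x + A.adjoint ⟨A ⟨R1 x, hx⟩, hy⟩ = x)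
    (R2 : H1 →L[ℂ] H1)
    (hR2 : ∀ x : H1, ∃ hx : R2 x ∈ B.adjoint.domain, ∃ hy : B.adjoint ⟨R2 x, hx⟩ ∈ B.domain,
      R2 x + B ⟨B.adjoint ⟨R2 x, hx⟩, hy⟩ = x)
    (P : H1 →L[ℂ] H1) (hPsa : IsSelfAdjoint P) (hPidem : ∀ x, P (P x) = P x)
    (hPmem : ∀ x : H1, ∃ h : P x ∈ B.adjoint.domain, B.adjoint ⟨P x, h⟩ = 0)
    (hPfix : ∀ (y : H1) (h : y ∈ B.adjoint.domain), B.adjoint ⟨y, h⟩ = 0 → P y = y) :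
    ∀ x : H1, R1 x + R2 x = x + P x := by
  classical
  obtain ⟨hBclosed, hdom, hker, p4, p5, p6, p7⟩ := hB
  set M : Submodule ℂ H1 := (LinearMap.range B.toFun).topologicalClosure with hM
  set MA : Submodule ℂ H2 := (LinearMap.range A.toFun).topologicalClosure with hMA
  -- range of A is contained in the domain of B
  have hAmem : ∀ x : A.domain, A x ∈ B.domain := by
    intro x
    rw [hdom]
    exact Submodule.mem_sup_left (LinearMap.mem_range_self _ x)
  have hranB : ∀ y : B.domain, B y ∈ M :=
    fun y => Submodule.le_topologicalClosure _ (LinearMap.mem_range_self _ y)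
  have hranA : ∀ x : A.domain, A x ∈ MA :=
    fun x => Submodule.le_topologicalClosure _ (LinearMap.mem_range_self _ x)
  have fA := LinearPMap.adjoint_isFormalAdjoint hAd
  -- the domain of B is dense
  have hBd : Dense (B.domain : Set H2) := by
    rw [Submodule.dense_iff_topologicalClosure_eq_top,
      Submodule.topologicalClosure_eq_top_iff, Submodule.eq_bot_iff]
    intro q hq
    have hq' : ∀ x : A.domain, ⟪(0 : H1), (x : H1)⟫_ℂ = ⟪q, A x⟫_ℂ := by
      intro x
      rw [inner_zero_left]
      exact ((Submodule.mem_orthogonal' _ _).mp hq _ (hAmem x)).symm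
    have hqmem : q ∈ A.adjoint.domain :=
      LinearPMap.mem_adjoint_domain_of_exists q ⟨0, hq'⟩
    have hqval : A.adjoint ⟨q, hqmem⟩ = 0 :=
      LinearPMap.adjoint_apply_eq hAd _ hq'
    have hqB : q ∈ B.domain := by
      rw [hdom]
      refine Submodule.mem_sup_right (Submodule.mem_map.mpr ⟨⟨q, hqmem⟩, ?_, rfl⟩)
      exact LinearMap.mem_ker.mpr hqval
    have := (Submodule.mem_orthogonal' _ _).mp hq q hqB
    exact inner_self_eq_zero.mp this
  have fB := LinearPMap.adjoint_isFormalAdjoint hBd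
  -- elements of the kernel of A are orthogonal to M
  have hNA_orth : ∀ (n : H1) (hn : n ∈ A.domain), A ⟨n, hn⟩ = 0 →
      ∀ z ∈ M, ⟪n, z⟫_ℂ = 0 := by
    intro n hn hn0 z hz
    have h0 : A ⟨n, hn⟩ ∈ B.domain := by rw [hn0]; exact zero_mem _
    obtain ⟨-, horth⟩ := p7 ⟨n, hn⟩ h0
    have hB0 : B ⟨A ⟨n, hn⟩, h0⟩ = 0 := by
      have he : (⟨A ⟨n, hn⟩, h0⟩ : B.domain) = 0 := Subtype.ext hn0
      rw [he, B.map_zero]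
    have := horth z hz
    rwa [hB0, sub_zero] at this
  -- elements of the kernel of A are in the kernel of B†
  have hNA_Bdag : ∀ (n : H1) (hn : n ∈ A.domain), A ⟨n, hn⟩ = 0 →
      ∃ h : n ∈ B.adjoint.domain, B.adjoint ⟨n, h⟩ = 0 := by
    intro n hn hn0
    have key : ∀ y : B.domain, ⟪(0 : H2), (y : H2)⟫_ℂ = ⟪n, B y⟫_ℂ := by
      intro y
      rw [inner_zero_left]
      exact (hNA_orth n hn hn0 (B y) (hranB y)).symm
    refine ⟨LinearPMap.mem_adjoint_domain_of_exists n ⟨0, key⟩, ?_⟩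
    exact LinearPMap.adjoint_apply_eq hBd _ key
  -- elements of the kernel of B† are orthogonal to M
  have hBdag0_orthM : ∀ (q : H1) (hq : q ∈ B.adjoint.domain), B.adjoint ⟨q, hq⟩ = 0 →
      ∀ z ∈ M, ⟪q, z⟫_ℂ = 0 := by
    intro q hq hq0 z hz
    have h1 : q ∈ (LinearMap.range B.toFun)ᗮ := by
      rw [Submodule.mem_orthogonal']
      rintro u ⟨y, rfl⟩
      have := fB ⟨q, hq⟩ y
      rw [hq0, inner_zero_left] at this
      exact this.symm
    have hz' : z ∈ (LinearMap.range B.toFun)ᗮᗮ := by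
      rw [Submodule.orthogonal_orthogonal_eq_closure]
      exact hz
    exact (Submodule.mem_orthogonal _ _).mp hz' q h1
  -- the kernel of A as a submodule of H1
  set NA : Submodule ℂ H1 := (LinearMap.ker A.toFun).map A.domain.subtype with hNA
  have hNA_mem : ∀ n ∈ NA, ∃ hn : n ∈ A.domain, A ⟨n, hn⟩ = 0 := by
    intro n hnNA
    obtain ⟨y, hy1, hy2⟩ := Submodule.mem_map.mp hnNA
    refine ⟨hy2 ▸ y.2, ?_⟩
    have : (⟨n, hy2 ▸ y.2⟩ : A.domain) = y := Subtype.ext hy2.symm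
    rw [this]
    exact LinearMap.mem_ker.mp hy1
  -- NA is closed
  have hNAclosed : IsClosed (NA : Set H1) := by
    rw [← isSeqClosed_iff_isClosed]
    intro f n hf hfn
    have hg : ∀ k, (f k, (0 : H2)) ∈ A.graph := by
      intro k
      obtain ⟨hn, hn0⟩ := hNA_mem (f k) (hf k)
      exact A.mem_graph_iff.mpr ⟨⟨f k, hn⟩, rfl, hn0⟩
    have hlim : Filter.Tendsto (fun k => (f k, (0 : H2))) Filter.atTop (nhds (n, (0 : H2))) :=
      hfn.prodMk_nhds tendsto_const_nhds
    have hmem : (n, (0 : H2)) ∈ A.graph := hA.mem_of_tendsto hlim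
      (Filter.Eventually.of_forall hg)
    obtain ⟨y, hy1, hy2⟩ := A.mem_graph_iff.mp hmem
    exact Submodule.mem_map.mpr ⟨y, LinearMap.mem_ker.mpr hy2, hy1⟩
  -- every element of A.domain is a sum of an element of M and an element of NA
  have hdomA_sub : ∀ x : A.domain, ∃ m ∈ M, ∃ nn ∈ NA, (x : H1) = m + nn := by
    intro x
    obtain ⟨h, h2, hABA⟩ := p4 x
    obtain ⟨hwM, -⟩ := p7 x h
    refine ⟨B ⟨A x, h⟩, hwM, (x : H1) - B ⟨A x, h⟩, ?_, by abel⟩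
    have hmem : (x : H1) - B ⟨A x, h⟩ ∈ A.domain := sub_mem x.2 h2
    refine Submodule.mem_map.mpr ⟨⟨(x : H1) - B ⟨A x, h⟩, hmem⟩, ?_, rfl⟩
    refine LinearMap.mem_ker.mpr ?_
    have he : (⟨(x : H1) - B ⟨A x, h⟩, hmem⟩ : A.domain) = x - ⟨B ⟨A x, h⟩, h2⟩ := rfl
    show A _ = 0
    rw [he, A.map_sub, hABA, sub_self]
  -- orthogonal complement of M is contained in NA
  have hMperp_NA : ∀ q : H1, (∀ z ∈ M, ⟪q, z⟫_ℂ = 0) → q ∈ NA := by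
    intro q hq
    haveI : CompleteSpace NA := hNAclosed.completeSpace_coe
    set pq : H1 := (NA.orthogonalProjectionOnto q : H1) with hpq
    have hr : q - pq ∈ NAᗮ := Submodule.sub_starProjection_mem_orthogonal (K := NA) q
    have hr0 : q - pq = 0 := by
      refine hAd.eq_zero_of_inner_left ℂ fun v hv' => ?_
      obtain ⟨m, hm, nn, hnn, hv⟩ := hdomA_sub ⟨v, hv'⟩
      rw [show v = m + nn from hv, inner_add_right]
      have e1 : ⟪q - pq, nn⟫_ℂ = 0 := (Submodule.mem_orthogonal' _ _).mp hr nn hnn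
      have e2 : ⟪q - pq, m⟫_ℂ = 0 := by
        rw [inner_sub_left, hq m hm]
        obtain ⟨hn, hn0⟩ := hNA_mem pq (SetLike.coe_mem _)
        rw [hNA_orth pq hn hn0 m hm, sub_self]
      rw [e1, e2, add_zero]
    have : q = pq := by rwa [sub_eq_zero] at hr0
    rw [this]
    exact SetLike.coe_mem _
  -- symmetry of P
  have hsym := ContinuousLinearMap.isSelfAdjoint_iff_isSymmetric.mp hPsa
  -- range of P lies in the kernel of A
  have hPNA : ∀ v : H1, ∃ h : P v ∈ A.domain, A ⟨P v, h⟩ = 0 := by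
    intro v
    obtain ⟨h, h0⟩ := hPmem v
    exact hNA_mem (P v) (hMperp_NA (P v) (hBdag0_orthM (P v) h h0))
  -- P vanishes on M
  have hPM0 : ∀ m ∈ M, P m = 0 := by
    intro m hm
    rw [← inner_self_eq_zero (𝕜 := ℂ)]
    have h1 : ⟪P m, P m⟫_ℂ = ⟪m, P (P m)⟫_ℂ := hsym m (P m)
    rw [h1, hPidem]
    rw [inner_eq_zero_symm]
    obtain ⟨h, h0⟩ := hPmem m
    exact hBdag0_orthM (P m) h h0 m hm
  -- injectivity of I + B B†
  have huniq : ∀ (d : H1) (hd : d ∈ B.adjoint.domain) (hd2 : B.adjoint ⟨d, hd⟩ ∈ B.domain),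
      d + B ⟨B.adjoint ⟨d, hd⟩, hd2⟩ = 0 → d = 0 := by
    intro d hd hd2 h0
    have h1 : ⟪d, d + B ⟨B.adjoint ⟨d, hd⟩, hd2⟩⟫_ℂ = 0 := by rw [h0, inner_zero_right]
    rw [inner_add_right] at h1
    have h2 : ⟪d, B ⟨B.adjoint ⟨d, hd⟩, hd2⟩⟫_ℂ
        = ⟪B.adjoint ⟨d, hd⟩, B.adjoint ⟨d, hd⟩⟫_ℂ := (fB ⟨d, hd⟩ ⟨_, hd2⟩).symm
    rw [h2, inner_self_eq_norm_sq_to_K, inner_self_eq_norm_sq_to_K] at h1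
    have h3 : ((‖d‖ ^ 2 + ‖B.adjoint ⟨d, hd⟩‖ ^ 2 : ℝ) : ℂ) = 0 := by
      push_cast
      exact h1
    have h4 : (‖d‖ ^ 2 + ‖B.adjoint ⟨d, hd⟩‖ ^ 2 : ℝ) = 0 := by exact_mod_cast h3
    have hn1 : (0:ℝ) ≤ ‖d‖ ^ 2 := sq_nonneg _
    have hn2 : (0:ℝ) ≤ ‖B.adjoint ⟨d, hd⟩‖ ^ 2 := sq_nonneg _
    have h5 : ‖d‖ ^ 2 = 0 := by nlinarith
    have h6 : ‖d‖ = 0 := by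
      have := sq_eq_zero_iff.mp h5
      exact this
    exact norm_eq_zero.mp h6
  -- main computation
  intro x
  obtain ⟨hx, hy, heq1⟩ := hR1 x
  set u : H1 := R1 x with hu
  set xu : A.domain := ⟨u, hx⟩ with hxu
  set Au : H2 := A xu with hAu
  obtain ⟨hAuB, h2, hABA⟩ := p4 xu
  set w : H1 := B ⟨Au, hAuB⟩ with hw
  obtain ⟨hwM, horthw⟩ := p7 xu hAuB
  set t : H1 := A.adjoint ⟨Au, hy⟩ with ht
  -- u - w is in the kernel of A
  have huw_dom : u - w ∈ A.domain := sub_mem hx h2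
  have huw_zero : A ⟨u - w, huw_dom⟩ = 0 := by
    have he : (⟨u - w, huw_dom⟩ : A.domain) = xu - ⟨w, h2⟩ := rfl
    rw [he, A.map_sub, ← hAu, hABA, sub_self]
  obtain ⟨huwB, huwB0⟩ := hNA_Bdag (u - w) huw_dom huw_zero
  -- P x = u - w
  have hPt : P t = 0 := by
    rw [← inner_self_eq_zero (𝕜 := ℂ)]
    obtain ⟨hPtA, hPt0⟩ := hPNA t
    have h1 : ⟪P t, P t⟫_ℂ = ⟪t, P (P t)⟫_ℂ := hsym t (P t)
    rw [h1, hPidem]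
    have h2 : ⟪t, P t⟫_ℂ = ⟪Au, A ⟨P t, hPtA⟩⟫_ℂ := fA ⟨Au, hy⟩ ⟨P t, hPtA⟩
    rw [h2, hPt0, inner_zero_right]
  have hPuw : P (u - w) = u - w := hPfix _ huwB huwB0
  have hPw : P w = 0 := hPM0 w hwM
  have hPx : P x = u - w := by
    have hx' : x = t + (w + (u - w)) := by rw [← heq1]; abel
    rw [hx', map_add, map_add, hPt, hPw, hPuw, zero_add, zero_add]
  -- t belongs to the domain of B† with B† t = Au
  have htmemB : ∀ y : B.domain, ⟪Au, (y : H2)⟫_ℂ = ⟪t, B y⟫_ℂ := by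
    intro y
    obtain ⟨hyA, -, -⟩ := p5 y
    obtain ⟨hABy, horthA⟩ := p6 y hyA
    have h1 : ⟪t, B y⟫_ℂ = ⟪Au, A ⟨B y, hyA⟩⟫_ℂ := fA ⟨Au, hy⟩ ⟨B y, hyA⟩
    have h2 : ⟪(y : H2) - A ⟨B y, hyA⟩, Au⟫_ℂ = 0 := horthA Au (hranA xu)
    rw [inner_sub_left, sub_eq_zero] at h2
    rw [h1]
    calc ⟪Au, (y : H2)⟫_ℂ = (starRingEnd ℂ) ⟪(y : H2), Au⟫_ℂ := (inner_conj_symm _ _).symm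
      _ = (starRingEnd ℂ) ⟪A ⟨B y, hyA⟩, Au⟫_ℂ := by rw [h2]
      _ = ⟪Au, A ⟨B y, hyA⟩⟫_ℂ := inner_conj_symm _ _
  have htB : t ∈ B.adjoint.domain := LinearPMap.mem_adjoint_domain_of_exists t ⟨Au, htmemB⟩
  have htBval : B.adjoint ⟨t, htB⟩ = Au := LinearPMap.adjoint_apply_eq hBd _ htmemB
  -- the candidate z for R2 x
  set z : H1 := t + (u - w) with hz
  have hz1 : z ∈ B.adjoint.domain := add_mem htB huwB
  have hz2 : B.adjoint ⟨z, hz1⟩ = Au := by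
    have he : (⟨z, hz1⟩ : B.adjoint.domain) = ⟨t, htB⟩ + ⟨u - w, huwB⟩ := rfl
    rw [he, B.adjoint.map_add, htBval, huwB0, add_zero]
  have hz3 : z + B ⟨Au, hAuB⟩ = x := by
    rw [hz, ← hw, ← heq1]
    abel
  -- uniqueness: R2 x = z
  obtain ⟨hx2, hy2, heq2⟩ := hR2 x
  have hd : R2 x - z ∈ B.adjoint.domain := sub_mem hx2 hz1
  have hdval : B.adjoint ⟨R2 x - z, hd⟩ = B.adjoint ⟨R2 x, hx2⟩ - Au := by
    have he : (⟨R2 x - z, hd⟩ : B.adjoint.domain) = ⟨R2 x, hx2⟩ - ⟨z, hz1⟩ := rfl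
    rw [he, B.adjoint.map_sub, hz2]
  have hd2 : B.adjoint ⟨R2 x - z, hd⟩ ∈ B.domain := by
    rw [hdval]; exact sub_mem hy2 hAuB
  have hdeq : (R2 x - z) + B ⟨B.adjoint ⟨R2 x - z, hd⟩, hd2⟩ = 0 := by
    have hsplit : (⟨B.adjoint ⟨R2 x - z, hd⟩, hd2⟩ : B.domain)
        = ⟨B.adjoint ⟨R2 x, hx2⟩, hy2⟩ - ⟨Au, hAuB⟩ := by
      apply Subtype.ext
      rw [AddSubgroupClass.coe_sub]
      exact hdval
    rw [hsplit, B.map_sub]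
    calc (R2 x - z) + (B ⟨B.adjoint ⟨R2 x, hx2⟩, hy2⟩ - B ⟨Au, hAuB⟩)
        = (R2 x + B ⟨B.adjoint ⟨R2 x, hx2⟩, hy2⟩) - (z + B ⟨Au, hAuB⟩) := by abel
      _ = x - x := by rw [heq2, hz3]
      _ = 0 := sub_self x
  have hR2z : R2 x = z := by
    have := huniq (R2 x - z) hd hd2 hdeq
    rwa [sub_eq_zero] at this
  rw [hR2z, hPx, ← heq1, hz]
  abel
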